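/- Let (C_t)_{t∈ℤ} be a partition of a code C ⊆ {0,1}^m by type, where type(c) = max_{i ∈ supp(c)} t(i) for a grouping function t : [m] → ℤ with groups I_t = t^{-1}(t). Then Σ_{t ∈ ℤ} CL((C_t ∪ C_{t+1})|_{I_t}) ≤ 2·CL(C). -/

import Mathlib

namespace Paper

/-- A chain of length `ℓ` in a code `C ⊆ {0,1}^m`. -/
def HasChain {m : ℕ} (C : Set (Fin m → Bool)) (ℓ : ℕ) : Prop :=
  ∃ (a : Fin ℓ → Fin m) (c : Fin ℓ → (Fin m → Bool)),
    Function.Injective a ∧ Function.Injective c ∧ (∀ i, c i ∈ C) ∧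
    (∀ i, c i (a i) = true) ∧ (∀ i j : Fin ℓ, i < j → c i (a j) = false)

/-- The chain length of a code. -/
noncomputable def CL {m : ℕ} (C : Set (Fin m → Bool)) : ℕ := sSup {ℓ | HasChain C ℓ}

/-- The support of a code. -/
def Supp {m : ℕ} (C : Set (Fin m → Bool)) : Set (Fin m) := {i | ∃ c ∈ C, c i = true}

/-- Hamming weight. -/
def wt {m : ℕ} (c : Fin m → Bool) : ℕ := (Finset.univ.filter fun i => c i = true).card

open Classical in
/-- Zero out the coordinates outside `S`. -/
noncomputable def mask {m : ℕ} (S : Set (Fin m)) (c : Fin m → Bool) : Fin m → Bool :=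
  fun i => if i ∈ S then c i else false

/-- Restriction of a code to a coordinate set `S`. -/
noncomputable def restrict {m : ℕ} (C : Set (Fin m → Bool)) (S : Set (Fin m)) :
    Set (Fin m → Bool) := mask S '' C

/-- Non-redundancy of a code. -/
noncomputable def NRD {m : ℕ} (C : Set (Fin m → Bool)) : ℕ :=
  sSup {k | ∃ S : Finset (Fin m), S.card = k ∧
    ∀ j ∈ S, ∃ c ∈ C, c j = true ∧ ∀ i ∈ S, i ≠ j → c i = false}

/-- The density `Φ(C)` of a finite code. -/
noncomputable def density {m : ℕ} (C : Finset (Fin m → Bool)) : ℝ :=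
  sInf {x : ℝ | ∃ C' : Finset (Fin m → Bool), C' ⊆ C ∧ C'.Nonempty ∧
    1 ≤ CL (↑C' : Set (Fin m → Bool)) ∧
    x = (Supp (↑C' : Set (Fin m → Bool))).ncard / (CL (↑C' : Set (Fin m → Bool)) : ℝ)}

/-- The group of coordinates with label `t`. -/
def grp {m : ℕ} (tf : Fin m → ℤ) (t : ℤ) : Set (Fin m) := {i | tf i = t}

/-- The codewords of type `t`: those whose maximal coordinate label equals `t`. -/
def typeClass {m : ℕ} (C : Set (Fin m → Bool)) (tf : Fin m → ℤ) (t : ℤ) :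
    Set (Fin m → Bool) :=
  {c ∈ C | (∃ i, c i = true ∧ tf i = t) ∧ ∀ i, c i = true → tf i ≤ t}

lemma hasChain_zero {m : ℕ} (C : Set (Fin m → Bool)) : HasChain C 0 :=
  ⟨Fin.elim0, Fin.elim0, fun i => i.elim0, fun i => i.elim0, fun i => i.elim0,
    fun i => i.elim0, fun i => i.elim0⟩

lemma hasChain_le {m ℓ : ℕ} {C : Set (Fin m → Bool)} (h : HasChain C ℓ) : ℓ ≤ m := by
  obtain ⟨a, c, ha, _⟩ := h
  simpa using Fintype.card_le_of_injective a ha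

lemma bddAbove_chains {m : ℕ} (C : Set (Fin m → Bool)) :
    BddAbove {ℓ | HasChain C ℓ} :=
  ⟨m, fun _ h => hasChain_le h⟩

lemma hasChain_CL {m : ℕ} (C : Set (Fin m → Bool)) : HasChain C (CL C) := by
  have h : CL C ∈ {ℓ | HasChain C ℓ} :=
    Nat.sSup_mem ⟨0, by exact hasChain_zero C⟩ (bddAbove_chains C)
  exact h

lemma le_CL {m ℓ : ℕ} {C : Set (Fin m → Bool)} (h : HasChain C ℓ) : ℓ ≤ CL C :=
  le_csSup (bddAbove_chains C) h

lemma typeClass_unique {m : ℕ} {C : Set (Fin m → Bool)} {tf : Fin m → ℤ}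
    {t1 t2 : ℤ} {c : Fin m → Bool} (h1 : c ∈ typeClass C tf t1)
    (h2 : c ∈ typeClass C tf t2) : t1 = t2 := by
  obtain ⟨-, ⟨i1, hi1, ht1⟩, hb1⟩ := h1
  obtain ⟨-, ⟨i2, hi2, ht2⟩, hb2⟩ := h2
  have := hb2 i1 hi1
  have := hb1 i2 hi2
  omega

lemma typeClass_vanish {m : ℕ} {C : Set (Fin m → Bool)} {tf : Fin m → ℤ}
    {t : ℤ} {c : Fin m → Bool} (h : c ∈ typeClass C tf t) {i : Fin m}
    (hi : t < tf i) : c i = false := by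
  obtain ⟨-, -, hb⟩ := h
  by_contra hc
  have := hb i (by simpa using hc)
  omega

/-- A multi-chain: a chain in `C` whose codewords come from type classes
`t`/`t+1` with `t ∈ F`, and whose coordinates have labels in `F`. -/
def MChain {m : ℕ} (C : Set (Fin m → Bool)) (tf : Fin m → ℤ) (F : Finset ℤ)
    (L : ℕ) : Prop :=
  ∃ (a : Fin L → Fin m) (c : Fin L → (Fin m → Bool)),
    Function.Injective a ∧ Function.Injective c ∧
    (∀ i, ∃ t ∈ F, c i ∈ typeClass C tf t ∪ typeClass C tf (t + 1)) ∧
    (∀ i, tf (a i) ∈ F) ∧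
    (∀ i, c i (a i) = true) ∧ (∀ i j, i < j → c i (a j) = false)

lemma MChain.hasChain {m : ℕ} {C : Set (Fin m → Bool)} {tf : Fin m → ℤ}
    {F : Finset ℤ} {L : ℕ} (h : MChain C tf F L) : HasChain C L := by
  obtain ⟨a, c, ha, hc, hmem, -, hd, hord⟩ := h
  refine ⟨a, c, ha, hc, fun i => ?_, hd, hord⟩
  obtain ⟨t, -, hm⟩ := hmem i
  rcases hm with hm | hm <;> exact hm.1

lemma MChain.zero {m : ℕ} (C : Set (Fin m → Bool)) (tf : Fin m → ℤ)
    (F : Finset ℤ) : MChain C tf F 0 :=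
  ⟨Fin.elim0, Fin.elim0, fun i => i.elim0, fun i => i.elim0, fun i => i.elim0,
    fun i => i.elim0, fun i => i.elim0, fun i => i.elim0⟩

/-- Lift a chain in the restriction of `C_t ∪ C_{t+1}` to `I_t`. -/
lemma MChain.single {m : ℕ} (C : Set (Fin m → Bool)) (tf : Fin m → ℤ) (t : ℤ)
    {L : ℕ}
    (h : HasChain (restrict (typeClass C tf t ∪ typeClass C tf (t + 1)) (grp tf t)) L) :
    MChain C tf {t} L := by
  classical
  obtain ⟨a, c, ha, hc, hmem, hd, hord⟩ := h
  choose d hdU hdm using fun i => (hmem i : c i ∈ mask (grp tf t) '' _)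
  have hS : ∀ i, a i ∈ grp tf t ∧ d i (a i) = true := by
    intro i
    have := hd i
    rw [← hdm i] at this
    unfold mask at this
    by_cases hg : a i ∈ grp tf t
    · refine ⟨hg, ?_⟩; simpa [hg] using this
    · simp [hg] at this
  refine ⟨a, d, ha, ?_, ?_, ?_, fun i => (hS i).2, ?_⟩
  · intro i j hij
    apply hc
    rw [← hdm i, ← hdm j, hij]
  · intro i
    exact ⟨t, Finset.mem_singleton_self t, hdU i⟩
  · intro i
    exact Finset.mem_singleton.mpr ((hS i).1 : tf (a i) = t)
  · intro i j hij
    have := hord i j hij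
    rw [← hdm i] at this
    unfold mask at this
    simpa [(hS j).1] using this

lemma MChain.append {m : ℕ} {C : Set (Fin m → Bool)} {tf : Fin m → ℤ}
    {F1 F2 : Finset ℤ} {L1 L2 : ℕ}
    (h1 : MChain C tf F1 L1) (h2 : MChain C tf F2 L2)
    (hgap : ∀ s ∈ F1, ∀ t ∈ F2, s + 1 < t) :
    MChain C tf (F1 ∪ F2) (L1 + L2) := by
  obtain ⟨a1, c1, ha1, hc1, hm1, ht1, hd1, ho1⟩ := h1
  obtain ⟨a2, c2, ha2, hc2, hm2, ht2, hd2, ho2⟩ := h2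
  -- measure the type of a codeword
  have type1 : ∀ i, ∃ τ s, s ∈ F1 ∧ (τ = s ∨ τ = s + 1) ∧ c1 i ∈ typeClass C tf τ := by
    intro i
    obtain ⟨s, hs, hm⟩ := hm1 i
    rcases hm with hm | hm
    · exact ⟨s, s, hs, Or.inl rfl, hm⟩
    · exact ⟨s + 1, s, hs, Or.inr rfl, hm⟩
  have type2 : ∀ i, ∃ τ s, s ∈ F2 ∧ (τ = s ∨ τ = s + 1) ∧ c2 i ∈ typeClass C tf τ := by
    intro i
    obtain ⟨s, hs, hm⟩ := hm2 i
    rcases hm with hm | hm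
    · exact ⟨s, s, hs, Or.inl rfl, hm⟩
    · exact ⟨s + 1, s, hs, Or.inr rfl, hm⟩
  refine ⟨fun i => if h : (i : ℕ) < L1 then a1 ⟨i, h⟩ else a2 ⟨(i : ℕ) - L1, by omega⟩,
    fun i => if h : (i : ℕ) < L1 then c1 ⟨i, h⟩ else c2 ⟨(i : ℕ) - L1, by omega⟩,
    ?_, ?_, ?_, ?_, ?_, ?_⟩
  · -- injectivity of a
    intro i j hij
    dsimp only at hij
    split_ifs at hij with hi hj hj
    · have h' := congrArg Fin.val (ha1 hij)
      simp only at h'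
      exact Fin.ext h'
    · exfalso
      have h1' : tf (a1 ⟨i, hi⟩) ∈ F1 := ht1 _
      have h2' : tf (a2 ⟨(j : ℕ) - L1, by omega⟩) ∈ F2 := ht2 _
      rw [hij] at h1'
      have := hgap _ h1' _ h2'
      omega
    · exfalso
      have h1' : tf (a1 ⟨j, hj⟩) ∈ F1 := ht1 _
      have h2' : tf (a2 ⟨(i : ℕ) - L1, by omega⟩) ∈ F2 := ht2 _
      rw [← hij] at h1'
      have := hgap _ h1' _ h2'
      omega
    · have h' := congrArg Fin.val (ha2 hij)
      simp only at h'
      have : (i : ℕ) = j := by omega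
      exact Fin.ext this
  · -- injectivity of c
    intro i j hij
    dsimp only at hij
    split_ifs at hij with hi hj hj
    · have h' := congrArg Fin.val (hc1 hij)
      simp only at h'
      exact Fin.ext h'
    · exfalso
      obtain ⟨τ1, s1, hs1, hτ1, hT1⟩ := type1 ⟨i, hi⟩
      obtain ⟨τ2, s2, hs2, hτ2, hT2⟩ := type2 ⟨(j : ℕ) - L1, by omega⟩
      rw [hij] at hT1
      have := typeClass_unique hT1 hT2
      have := hgap _ hs1 _ hs2
      omega
    · exfalso
      obtain ⟨τ1, s1, hs1, hτ1, hT1⟩ := type1 ⟨j, hj⟩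
      obtain ⟨τ2, s2, hs2, hτ2, hT2⟩ := type2 ⟨(i : ℕ) - L1, by omega⟩
      rw [← hij] at hT1
      have := typeClass_unique hT1 hT2
      have := hgap _ hs1 _ hs2
      omega
    · have h' := congrArg Fin.val (hc2 hij)
      simp only at h'
      have : (i : ℕ) = j := by omega
      exact Fin.ext this
  · -- codeword membership
    intro i
    dsimp only
    split_ifs with hi
    · obtain ⟨s, hs, hm⟩ := hm1 ⟨i, hi⟩
      exact ⟨s, Finset.mem_union_left _ hs, hm⟩
    · obtain ⟨s, hs, hm⟩ := hm2 ⟨(i : ℕ) - L1, by omega⟩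
      exact ⟨s, Finset.mem_union_right _ hs, hm⟩
  · -- coordinate labels
    intro i
    dsimp only
    split_ifs with hi
    · exact Finset.mem_union_left _ (ht1 _)
    · exact Finset.mem_union_right _ (ht2 _)
  · -- diagonal
    intro i
    dsimp only
    split_ifs with hi
    · exact hd1 _
    · exact hd2 _
  · -- order
    intro i j hij
    have hij' : (i : ℕ) < (j : ℕ) := hij
    dsimp only
    split_ifs with hi hj hj
    · exact ho1 _ _ (by exact hij')
    · -- cross: old codeword vanishes on new coordinate
      obtain ⟨τ1, s1, hs1, hτ1, hT1⟩ := type1 ⟨i, hi⟩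
      have h2' : tf (a2 ⟨(j : ℕ) - L1, by omega⟩) ∈ F2 := ht2 _
      apply typeClass_vanish hT1
      have := hgap _ hs1 _ h2'
      omega
    · omega
    · exact ho2 _ _ (by simp [Fin.lt_def]; omega)

lemma MChain.of_gap {m : ℕ} (C : Set (Fin m → Bool)) (tf : Fin m → ℤ)
    (F : Finset ℤ) (hgap : ∀ t1 ∈ F, ∀ t2 ∈ F, t1 < t2 → t1 + 1 < t2) :
    MChain C tf F
      (∑ t ∈ F, CL (restrict (typeClass C tf t ∪ typeClass C tf (t + 1)) (grp tf t))) := by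
  classical
  induction F using Finset.induction_on_max with
  | empty => simpa using MChain.zero C tf ∅
  | insert t' F' hmax ih =>
    have ht'F : t' ∉ F' := fun h => lt_irrefl t' (hmax t' h)
    have hgap' : ∀ t1 ∈ F', ∀ t2 ∈ F', t1 < t2 → t1 + 1 < t2 := by
      intro t1 h1 t2 h2
      exact hgap t1 (Finset.mem_insert_of_mem h1) t2 (Finset.mem_insert_of_mem h2)
    have M1 := ih hgap'
    have M2 : MChain C tf {t'}
        (CL (restrict (typeClass C tf t' ∪ typeClass C tf (t' + 1)) (grp tf t'))) :=
      MChain.single C tf t' (hasChain_CL _)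
    have hg : ∀ s ∈ F', ∀ u ∈ ({t'} : Finset ℤ), s + 1 < u := by
      intro s hs u hu
      rw [Finset.mem_singleton] at hu
      subst hu
      exact hgap s (Finset.mem_insert_of_mem hs) u (Finset.mem_insert_self _ _) (hmax s hs)
    have := M1.append M2 hg
    have hu : F' ∪ {t'} = insert t' F' := by ext x; simp [or_comm]
    rw [hu] at this
    rw [Finset.sum_insert ht'F, add_comm]
    exact this

lemma sum_gap_le {m : ℕ} (C : Set (Fin m → Bool)) (tf : Fin m → ℤ)
    (F : Finset ℤ) (hgap : ∀ t1 ∈ F, ∀ t2 ∈ F, t1 < t2 → t1 + 1 < t2) :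
    ∑ t ∈ F, CL (restrict (typeClass C tf t ∪ typeClass C tf (t + 1)) (grp tf t)) ≤
      CL C :=
  le_CL (MChain.of_gap C tf F hgap).hasChain

/-- `Σ_{t ∈ ℤ} CL((C_t ∪ C_{t+1})|_{I_t}) ≤ 2·CL(C)`
(stated for every finite set of integers, as all terms are nonnegative). -/
theorem sum_cl_groups_le {m : ℕ} (C : Set (Fin m → Bool)) (tf : Fin m → ℤ)
    (F : Finset ℤ) :
    ∑ t ∈ F, CL (restrict (typeClass C tf t ∪ typeClass C tf (t + 1)) (grp tf t)) ≤
      2 * CL C := by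
  classical
  have heven := sum_gap_le C tf (F.filter (fun t => Even t)) (by
    intro t1 h1 t2 h2 hlt
    obtain ⟨-, ⟨a, ha⟩⟩ := Finset.mem_filter.mp h1
    obtain ⟨-, ⟨b, hb⟩⟩ := Finset.mem_filter.mp h2
    omega)
  have hodd := sum_gap_le C tf (F.filter (fun t => ¬ Even t)) (by
    intro t1 h1 t2 h2 hlt
    obtain ⟨-, h1'⟩ := Finset.mem_filter.mp h1
    obtain ⟨-, h2'⟩ := Finset.mem_filter.mp h2
    obtain ⟨a, ha⟩ := Int.not_even_iff_odd.mp h1'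
    obtain ⟨b, hb⟩ := Int.not_even_iff_odd.mp h2'
    omega)
  have hsplit := Finset.sum_filter_add_sum_filter_not F (fun t => Even t)
    (fun t => CL (restrict (typeClass C tf t ∪ typeClass C tf (t + 1)) (grp tf t)))
  omega
end Paper
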